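/- For any nonzero vectors u, v in ℝ^K, the L2 distance between the L1-normalized vectors satisfies ‖u/‖u‖₁ − v/‖v‖₁‖₂ ≤ ((1 + √K)/‖u‖₁) · ‖u − v‖₂. -/

import Mathlib

open Finset

private lemma eucl_norm_eq {K : ℕ} (f : Fin K → ℝ) :
    ‖(WithLp.equiv 2 (Fin K → ℝ)).symm f‖ = Real.sqrt (∑ i, f i ^ 2) := by
  rw [EuclideanSpace.norm_eq]
  simp [Real.norm_eq_abs, sq_abs]

/-- For any nonzero vectors `u, v ∈ ℝ^K`, the ℓ² distance between the ℓ¹-normalized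
vectors satisfies `‖u/‖u‖₁ − v/‖v‖₁‖₂ ≤ ((1 + √K)/‖u‖₁) * ‖u − v‖₂`. -/
theorem stmt_0 (K : ℕ) (u v : Fin K → ℝ)
    (hu : ∑ i, |u i| ≠ 0) (hv : ∑ i, |v i| ≠ 0) :
    Real.sqrt (∑ i, (u i / (∑ j, |u j|) - v i / (∑ j, |v j|)) ^ 2)
      ≤ ((1 + Real.sqrt K) / (∑ j, |u j|)) * Real.sqrt (∑ i, (u i - v i) ^ 2) := by
  set a := ∑ j, |u j| with ha_def
  set b := ∑ j, |v j| with hb_def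
  have ha : 0 < a := lt_of_le_of_ne (Finset.sum_nonneg fun i _ => abs_nonneg _) (Ne.symm hu)
  have hb : 0 < b := lt_of_le_of_ne (Finset.sum_nonneg fun i _ => abs_nonneg _) (Ne.symm hv)
  set D := Real.sqrt (∑ i, (u i - v i) ^ 2) with hD_def
  have hD : 0 ≤ D := Real.sqrt_nonneg _
  set F : Fin K → ℝ := fun i => (u i - v i) / a with hF
  set G : Fin K → ℝ := fun i => v i * ((b - a) / (a * b)) with hG
  have hdecomp : ∀ i, u i / a - v i / b = F i + G i := by
    intro i
    field_simp [hF, hG]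
    simp only [hF, hG]
    field_simp
    ring
  have key : Real.sqrt (∑ i, (F i + G i) ^ 2)
      ≤ Real.sqrt (∑ i, F i ^ 2) + Real.sqrt (∑ i, G i ^ 2) := by
    have h := norm_add_le ((WithLp.equiv 2 (Fin K → ℝ)).symm F)
      ((WithLp.equiv 2 (Fin K → ℝ)).symm G)
    have e : (WithLp.equiv 2 (Fin K → ℝ)).symm F + (WithLp.equiv 2 (Fin K → ℝ)).symm G
        = (WithLp.equiv 2 (Fin K → ℝ)).symm (F + G) := rfl
    rw [eucl_norm_eq, eucl_norm_eq, e, eucl_norm_eq] at h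
    simpa using h
  have hFnorm : Real.sqrt (∑ i, F i ^ 2) = D / a := by
    have h1 : ∑ i, F i ^ 2 = (∑ i, (u i - v i) ^ 2) * (1 / a) ^ 2 := by
      rw [Finset.sum_mul]
      exact Finset.sum_congr rfl fun i _ => by rw [hF]; ring
    rw [h1, Real.sqrt_mul (Finset.sum_nonneg fun i _ => sq_nonneg _),
      Real.sqrt_sq (by positivity), ← hD_def]
    ring
  -- ℓ² ≤ ℓ¹ for v
  have hv2 : Real.sqrt (∑ i, v i ^ 2) ≤ b := by
    rw [show (∑ i, v i ^ 2) = ∑ i, |v i| ^ 2 by simp [sq_abs]]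
    refine Real.sqrt_le_sqrt (Finset.sum_sq_le_sq_sum_of_nonneg
      fun i _ => abs_nonneg _) |>.trans ?_
    rw [Real.sqrt_sq hb.le]
  -- |b - a| ≤ √K * D
  have habsub : |b - a| ≤ Real.sqrt K * D := by
    have h1 : |b - a| ≤ ∑ i, |u i - v i| := by
      rw [ha_def, hb_def, ← Finset.sum_sub_distrib]
      refine (Finset.abs_sum_le_sum_abs _ _).trans (Finset.sum_le_sum fun i _ => ?_)
      exact (abs_abs_sub_abs_le_abs_sub _ _).trans_eq (abs_sub_comm _ _)
    refine h1.trans ?_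
    have h2 : (∑ i, |u i - v i|) ^ 2 ≤ (K : ℝ) * ∑ i, (u i - v i) ^ 2 := by
      have := sq_sum_le_card_mul_sum_sq (s := Finset.univ)
        (f := fun i => |u i - v i|)
      simpa [sq_abs] using this
    have h3 : (∑ i, |u i - v i|) ≤ Real.sqrt ((K : ℝ) * ∑ i, (u i - v i) ^ 2) := by
      rw [← Real.sqrt_sq (Finset.sum_nonneg fun i _ => abs_nonneg _)]
      exact Real.sqrt_le_sqrt h2
    refine h3.trans_eq ?_
    rw [Real.sqrt_mul (Nat.cast_nonneg _), hD_def]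
  have hGnorm : Real.sqrt (∑ i, G i ^ 2) ≤ Real.sqrt K * D / a := by
    have h1 : ∑ i, G i ^ 2 = (∑ i, v i ^ 2) * ((b - a) / (a * b)) ^ 2 := by
      rw [Finset.sum_mul]
      exact Finset.sum_congr rfl fun i _ => by rw [hG]; ring
    rw [h1, Real.sqrt_mul (Finset.sum_nonneg fun i _ => sq_nonneg _),
      Real.sqrt_sq_eq_abs]
    calc Real.sqrt (∑ i, v i ^ 2) * |(b - a) / (a * b)|
        ≤ b * (|b - a| / (a * b)) := by
          rw [abs_div, abs_of_pos (mul_pos ha hb)]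
          exact mul_le_mul hv2 le_rfl (by positivity) hb.le
      _ = |b - a| / a := by field_simp
      _ ≤ Real.sqrt K * D / a := by gcongr
  calc Real.sqrt (∑ i, (u i / a - v i / b) ^ 2)
      = Real.sqrt (∑ i, (F i + G i) ^ 2) := by
        congr 1; exact Finset.sum_congr rfl fun i _ => by rw [hdecomp i]
    _ ≤ Real.sqrt (∑ i, F i ^ 2) + Real.sqrt (∑ i, G i ^ 2) := key
    _ ≤ D / a + Real.sqrt K * D / a := by
        rw [hFnorm]; exact add_le_add le_rfl hGnorm
    _ = ((1 + Real.sqrt K) / a) * D := by ring
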